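/- For all real constants c₅, h₁₁, h₁₂, h₂₁, h₂₂, define Υ : ℝ → ℝ by Υ(s) = c₅·cos s·sin s + h₁₁·cos s·|cos s| + h₁₂·cos s·|sin s| + h₂₁·sin s·|cos s| + h₂₂·sin s·|sin s|. Then ∫₀^{2π} Υ(s) ds = 0 and ∫₀^{2π} s·Υ(s) ds = −(π/2)·(c₅ + 2h₂₁ + π·h₂₂). -/

import Mathlib

open Real

section aux19

private lemma d1 (x : ℝ) : HasDerivAt (fun s : ℝ => sin s ^ 2 / 2) (cos x * sin x) x := by
  have h := ((Real.hasDerivAt_sin x).pow 2).div_const 2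
  refine h.congr_deriv ?_; norm_num; ring

private lemma d2 (x : ℝ) : HasDerivAt (fun s : ℝ => (s + sin s * cos s) / 2) (cos x * cos x) x := by
  have h := ((hasDerivAt_id x).add ((Real.hasDerivAt_sin x).mul (Real.hasDerivAt_cos x))).div_const 2
  refine h.congr_deriv ?_; symm; norm_num
  linear_combination (Real.sin_sq_add_cos_sq x) / 2

private lemma d3 (x : ℝ) : HasDerivAt (fun s : ℝ => (s - sin s * cos s) / 2) (sin x * sin x) x := by
  have h := ((hasDerivAt_id x).sub ((Real.hasDerivAt_sin x).mul (Real.hasDerivAt_cos x))).div_const 2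
  refine h.congr_deriv ?_; symm; norm_num
  linear_combination (Real.sin_sq_add_cos_sq x) / 2

private lemma d4 (x : ℝ) :
    HasDerivAt (fun s : ℝ => s * sin s ^ 2 / 2 - s / 4 + sin s * cos s / 4)
      (x * sin x * cos x) x := by
  have h := (((((hasDerivAt_id x).mul ((Real.hasDerivAt_sin x).pow 2)).div_const 2).sub
    ((hasDerivAt_id x).div_const 4)).add
    (((Real.hasDerivAt_sin x).mul (Real.hasDerivAt_cos x)).div_const 4))
  refine h.congr_deriv ?_; symm; simp only [Pi.pow_apply, Pi.mul_apply, Nat.cast_ofNat, Nat.reduceSub]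
  simp only [id_eq]
  linear_combination -(Real.sin_sq_add_cos_sq x) / 4

private lemma d5 (x : ℝ) :
    HasDerivAt (fun s : ℝ => s ^ 2 / 4 + s * (sin s * cos s) / 2 - sin s ^ 2 / 4)
      (x * cos x * cos x) x := by
  have h := ((((hasDerivAt_pow 2 x).div_const 4).add
    (((hasDerivAt_id x).mul ((Real.hasDerivAt_sin x).mul (Real.hasDerivAt_cos x))).div_const 2)).sub
    (((Real.hasDerivAt_sin x).pow 2).div_const 4))
  refine h.congr_deriv ?_; symm; simp only [Pi.pow_apply, Pi.mul_apply, Nat.cast_ofNat, Nat.reduceSub]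
  simp only [id_eq]
  linear_combination (x / 2) * (Real.sin_sq_add_cos_sq x)

private lemma d6 (x : ℝ) :
    HasDerivAt (fun s : ℝ => s ^ 2 / 4 - s * (sin s * cos s) / 2 + sin s ^ 2 / 4)
      (x * sin x * sin x) x := by
  have h := ((((hasDerivAt_pow 2 x).div_const 4).sub
    (((hasDerivAt_id x).mul ((Real.hasDerivAt_sin x).mul (Real.hasDerivAt_cos x))).div_const 2)).add
    (((Real.hasDerivAt_sin x).pow 2).div_const 4))
  refine h.congr_deriv ?_; symm; simp only [Pi.pow_apply, Pi.mul_apply, Nat.cast_ofNat, Nat.reduceSub]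
  simp only [id_eq]
  linear_combination (x / 2) * (Real.sin_sq_add_cos_sq x)

private lemma piece (a b : ℝ) (F f g : ℝ → ℝ) (hF : ∀ x, HasDerivAt F (f x) x)
    (hf : Continuous f) (hfg : Set.EqOn g f (Set.uIcc a b)) :
    ∫ x in a..b, g x = F b - F a := by
  rw [intervalIntegral.integral_congr hfg]
  exact intervalIntegral.integral_eq_sub_of_hasDerivAt (fun x _ => hF x)
    (hf.intervalIntegrable a b)

private lemma pieceN (a b : ℝ) (F f g : ℝ → ℝ) (hF : ∀ x, HasDerivAt F (f x) x)
    (hf : Continuous f) (hfg : Set.EqOn g (fun x => -(f x)) (Set.uIcc a b)) :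
    ∫ x in a..b, g x = F a - F b := by
  have h2 : ∫ x in a..b, f x = F b - F a :=
    intervalIntegral.integral_eq_sub_of_hasDerivAt (fun x _ => hF x)
      (hf.intervalIntegrable a b)
  rw [intervalIntegral.integral_congr hfg, intervalIntegral.integral_neg, h2]
  ring

-- sign facts
private lemma sin_nn {x : ℝ} (hx : x ∈ Set.Icc (0:ℝ) π) : |sin x| = sin x :=
  abs_of_nonneg (Real.sin_nonneg_of_nonneg_of_le_pi hx.1 hx.2)

private lemma sin_np {x : ℝ} (hx : x ∈ Set.Icc π (2*π)) : |sin x| = -sin x := by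
  have h : sin (x - π) ≥ 0 := Real.sin_nonneg_of_nonneg_of_le_pi (by linarith [hx.1]) (by linarith [hx.2])
  rw [Real.sin_sub_pi] at h
  exact abs_of_nonpos (by linarith)

private lemma cos_nn1 {x : ℝ} (hx : x ∈ Set.Icc (0:ℝ) (π/2)) : |cos x| = cos x :=
  abs_of_nonneg (Real.cos_nonneg_of_mem_Icc ⟨by linarith [hx.1, Real.pi_pos], hx.2⟩)

private lemma cos_np {x : ℝ} (hx : x ∈ Set.Icc (π/2) (3*π/2)) : |cos x| = -cos x := by
  have h : cos (x - π) ≥ 0 := Real.cos_nonneg_of_mem_Icc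
    ⟨by linarith [hx.1], by linarith [hx.2]⟩
  rw [Real.cos_sub_pi] at h
  exact abs_of_nonpos (by linarith)

private lemma cos_nn2 {x : ℝ} (hx : x ∈ Set.Icc (3*π/2) (2*π)) : |cos x| = cos x := by
  have h : cos (x - 2*π) ≥ 0 := Real.cos_nonneg_of_mem_Icc
    ⟨by linarith [hx.1], by linarith [hx.2, Real.pi_pos]⟩
  rw [Real.cos_sub_two_pi] at h
  exact abs_of_nonneg h

private lemma sin32 : sin (3*π/2) = -1 := by
  have h : (3*π/2) = π + π/2 := by ring
  rw [h, Real.sin_add]; simp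

private lemma cos32 : cos (3*π/2) = 0 := by
  have h : (3*π/2) = π + π/2 := by ring
  rw [h, Real.cos_add]; simp



private lemma iA1 : ∫ x in (0:ℝ)..(2*π), cos x * sin x = 0 := by
  have p1 : ∫ x in (0:ℝ)..(2*π), cos x * sin x
      = (fun s : ℝ => sin s ^ 2 / 2) (2*π) - (fun s : ℝ => sin s ^ 2 / 2) 0 :=
    piece _ _ _ (fun x => cos x * sin x) _ d1 (by fun_prop) (fun x hx => rfl)
  rw [p1]
  simp [Real.sin_two_pi, Real.cos_two_pi]
  try ring

private lemma iA2 : ∫ x in (0:ℝ)..(2*π), cos x * |cos x| = 0 := by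
  have pi_pos := Real.pi_pos
  have hc : Continuous fun x : ℝ => cos x * |cos x| := by fun_prop
  have p1 : ∫ x in (0:ℝ)..(π/2), cos x * |cos x|
      = (fun s : ℝ => (s + sin s * cos s) / 2) (π/2) - (fun s : ℝ => (s + sin s * cos s) / 2) 0 :=
    piece _ _ _ (fun x => cos x * cos x) _ d2 (by fun_prop) (fun x hx => by
      rw [Set.uIcc_of_le (by linarith)] at hx
      rw [cos_nn1 hx]; try ring)
  have p2 : ∫ x in (π/2:ℝ)..(3*π/2), cos x * |cos x|
      = (fun s : ℝ => (s + sin s * cos s) / 2) (π/2) - (fun s : ℝ => (s + sin s * cos s) / 2) (3*π/2) :=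
    pieceN _ _ _ (fun x => cos x * cos x) _ d2 (by fun_prop) (fun x hx => by
      rw [Set.uIcc_of_le (by linarith)] at hx
      rw [cos_np hx]; try ring)
  have p3 : ∫ x in (3*π/2:ℝ)..(2*π), cos x * |cos x|
      = (fun s : ℝ => (s + sin s * cos s) / 2) (2*π) - (fun s : ℝ => (s + sin s * cos s) / 2) (3*π/2) :=
    piece _ _ _ (fun x => cos x * cos x) _ d2 (by fun_prop) (fun x hx => by
      rw [Set.uIcc_of_le (by linarith)] at hx
      rw [cos_nn2 hx]; try ring)
  rw [← intervalIntegral.integral_add_adjacent_intervals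
        (hc.intervalIntegrable 0 (π/2)) (hc.intervalIntegrable (π/2) (2*π)),
      ← intervalIntegral.integral_add_adjacent_intervals
        (hc.intervalIntegrable (π/2) (3*π/2)) (hc.intervalIntegrable (3*π/2) (2*π)),
      p1, p2, p3]
  simp [Real.sin_pi_div_two, Real.cos_pi_div_two, sin32, cos32,
    Real.sin_two_pi, Real.cos_two_pi]
  try ring

private lemma iA3 : ∫ x in (0:ℝ)..(2*π), cos x * |sin x| = 0 := by
  have pi_pos := Real.pi_pos
  have hc : Continuous fun x : ℝ => cos x * |sin x| := by fun_prop
  have p1 : ∫ x in (0:ℝ)..π, cos x * |sin x|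
      = (fun s : ℝ => sin s ^ 2 / 2) π - (fun s : ℝ => sin s ^ 2 / 2) 0 :=
    piece _ _ _ (fun x => cos x * sin x) _ d1 (by fun_prop) (fun x hx => by
      rw [Set.uIcc_of_le (by linarith)] at hx
      rw [sin_nn hx]; try ring)
  have p2 : ∫ x in (π:ℝ)..(2*π), cos x * |sin x|
      = (fun s : ℝ => sin s ^ 2 / 2) π - (fun s : ℝ => sin s ^ 2 / 2) (2*π) :=
    pieceN _ _ _ (fun x => cos x * sin x) _ d1 (by fun_prop) (fun x hx => by
      rw [Set.uIcc_of_le (by linarith)] at hx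
      rw [sin_np hx]; try ring)
  rw [← intervalIntegral.integral_add_adjacent_intervals
        (hc.intervalIntegrable 0 π) (hc.intervalIntegrable π (2*π)),
      p1, p2]
  simp [Real.sin_pi, Real.cos_pi, Real.sin_two_pi, Real.cos_two_pi]
  try ring

private lemma iA4 : ∫ x in (0:ℝ)..(2*π), sin x * |cos x| = 0 := by
  have pi_pos := Real.pi_pos
  have hc : Continuous fun x : ℝ => sin x * |cos x| := by fun_prop
  have p1 : ∫ x in (0:ℝ)..(π/2), sin x * |cos x|
      = (fun s : ℝ => sin s ^ 2 / 2) (π/2) - (fun s : ℝ => sin s ^ 2 / 2) 0 :=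
    piece _ _ _ (fun x => cos x * sin x) _ d1 (by fun_prop) (fun x hx => by
      rw [Set.uIcc_of_le (by linarith)] at hx
      rw [cos_nn1 hx]; try ring)
  have p2 : ∫ x in (π/2:ℝ)..(3*π/2), sin x * |cos x|
      = (fun s : ℝ => sin s ^ 2 / 2) (π/2) - (fun s : ℝ => sin s ^ 2 / 2) (3*π/2) :=
    pieceN _ _ _ (fun x => cos x * sin x) _ d1 (by fun_prop) (fun x hx => by
      rw [Set.uIcc_of_le (by linarith)] at hx
      rw [cos_np hx]; try ring)
  have p3 : ∫ x in (3*π/2:ℝ)..(2*π), sin x * |cos x|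
      = (fun s : ℝ => sin s ^ 2 / 2) (2*π) - (fun s : ℝ => sin s ^ 2 / 2) (3*π/2) :=
    piece _ _ _ (fun x => cos x * sin x) _ d1 (by fun_prop) (fun x hx => by
      rw [Set.uIcc_of_le (by linarith)] at hx
      rw [cos_nn2 hx]; try ring)
  rw [← intervalIntegral.integral_add_adjacent_intervals
        (hc.intervalIntegrable 0 (π/2)) (hc.intervalIntegrable (π/2) (2*π)),
      ← intervalIntegral.integral_add_adjacent_intervals
        (hc.intervalIntegrable (π/2) (3*π/2)) (hc.intervalIntegrable (3*π/2) (2*π)),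
      p1, p2, p3]
  simp [Real.sin_pi_div_two, Real.cos_pi_div_two, sin32, cos32,
    Real.sin_two_pi, Real.cos_two_pi]
  try ring

private lemma iA5 : ∫ x in (0:ℝ)..(2*π), sin x * |sin x| = 0 := by
  have pi_pos := Real.pi_pos
  have hc : Continuous fun x : ℝ => sin x * |sin x| := by fun_prop
  have p1 : ∫ x in (0:ℝ)..π, sin x * |sin x|
      = (fun s : ℝ => (s - sin s * cos s) / 2) π - (fun s : ℝ => (s - sin s * cos s) / 2) 0 :=
    piece _ _ _ (fun x => sin x * sin x) _ d3 (by fun_prop) (fun x hx => by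
      rw [Set.uIcc_of_le (by linarith)] at hx
      rw [sin_nn hx]; try ring)
  have p2 : ∫ x in (π:ℝ)..(2*π), sin x * |sin x|
      = (fun s : ℝ => (s - sin s * cos s) / 2) π - (fun s : ℝ => (s - sin s * cos s) / 2) (2*π) :=
    pieceN _ _ _ (fun x => sin x * sin x) _ d3 (by fun_prop) (fun x hx => by
      rw [Set.uIcc_of_le (by linarith)] at hx
      rw [sin_np hx]; try ring)
  rw [← intervalIntegral.integral_add_adjacent_intervals
        (hc.intervalIntegrable 0 π) (hc.intervalIntegrable π (2*π)),
      p1, p2]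
  simp [Real.sin_pi, Real.cos_pi, Real.sin_two_pi, Real.cos_two_pi]
  try ring

private lemma iB1 : ∫ x in (0:ℝ)..(2*π), x * cos x * sin x = -(π/2) := by
  have p1 : ∫ x in (0:ℝ)..(2*π), x * cos x * sin x
      = (fun s : ℝ => s * sin s ^ 2 / 2 - s / 4 + sin s * cos s / 4) (2*π) - (fun s : ℝ => s * sin s ^ 2 / 2 - s / 4 + sin s * cos s / 4) 0 :=
    piece _ _ _ (fun x => x * sin x * cos x) _ d4 (by fun_prop) (fun x hx => by ring)
  rw [p1]
  simp [Real.sin_two_pi, Real.cos_two_pi]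
  try ring

private lemma iB2 : ∫ x in (0:ℝ)..(2*π), x * cos x * |cos x| = 0 := by
  have pi_pos := Real.pi_pos
  have hc : Continuous fun x : ℝ => x * cos x * |cos x| := by fun_prop
  have p1 : ∫ x in (0:ℝ)..(π/2), x * cos x * |cos x|
      = (fun s : ℝ => s ^ 2 / 4 + s * (sin s * cos s) / 2 - sin s ^ 2 / 4) (π/2) - (fun s : ℝ => s ^ 2 / 4 + s * (sin s * cos s) / 2 - sin s ^ 2 / 4) 0 :=
    piece _ _ _ (fun x => x * cos x * cos x) _ d5 (by fun_prop) (fun x hx => by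
      rw [Set.uIcc_of_le (by linarith)] at hx
      rw [cos_nn1 hx]; try ring)
  have p2 : ∫ x in (π/2:ℝ)..(3*π/2), x * cos x * |cos x|
      = (fun s : ℝ => s ^ 2 / 4 + s * (sin s * cos s) / 2 - sin s ^ 2 / 4) (π/2) - (fun s : ℝ => s ^ 2 / 4 + s * (sin s * cos s) / 2 - sin s ^ 2 / 4) (3*π/2) :=
    pieceN _ _ _ (fun x => x * cos x * cos x) _ d5 (by fun_prop) (fun x hx => by
      rw [Set.uIcc_of_le (by linarith)] at hx
      rw [cos_np hx]; try ring)
  have p3 : ∫ x in (3*π/2:ℝ)..(2*π), x * cos x * |cos x|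
      = (fun s : ℝ => s ^ 2 / 4 + s * (sin s * cos s) / 2 - sin s ^ 2 / 4) (2*π) - (fun s : ℝ => s ^ 2 / 4 + s * (sin s * cos s) / 2 - sin s ^ 2 / 4) (3*π/2) :=
    piece _ _ _ (fun x => x * cos x * cos x) _ d5 (by fun_prop) (fun x hx => by
      rw [Set.uIcc_of_le (by linarith)] at hx
      rw [cos_nn2 hx]; try ring)
  rw [← intervalIntegral.integral_add_adjacent_intervals
        (hc.intervalIntegrable 0 (π/2)) (hc.intervalIntegrable (π/2) (2*π)),
      ← intervalIntegral.integral_add_adjacent_intervals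
        (hc.intervalIntegrable (π/2) (3*π/2)) (hc.intervalIntegrable (3*π/2) (2*π)),
      p1, p2, p3]
  simp [Real.sin_pi_div_two, Real.cos_pi_div_two, sin32, cos32,
    Real.sin_two_pi, Real.cos_two_pi]
  try ring

private lemma iB3 : ∫ x in (0:ℝ)..(2*π), x * cos x * |sin x| = 0 := by
  have pi_pos := Real.pi_pos
  have hc : Continuous fun x : ℝ => x * cos x * |sin x| := by fun_prop
  have p1 : ∫ x in (0:ℝ)..π, x * cos x * |sin x|
      = (fun s : ℝ => s * sin s ^ 2 / 2 - s / 4 + sin s * cos s / 4) π - (fun s : ℝ => s * sin s ^ 2 / 2 - s / 4 + sin s * cos s / 4) 0 :=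
    piece _ _ _ (fun x => x * sin x * cos x) _ d4 (by fun_prop) (fun x hx => by
      rw [Set.uIcc_of_le (by linarith)] at hx
      rw [sin_nn hx]; try ring)
  have p2 : ∫ x in (π:ℝ)..(2*π), x * cos x * |sin x|
      = (fun s : ℝ => s * sin s ^ 2 / 2 - s / 4 + sin s * cos s / 4) π - (fun s : ℝ => s * sin s ^ 2 / 2 - s / 4 + sin s * cos s / 4) (2*π) :=
    pieceN _ _ _ (fun x => x * sin x * cos x) _ d4 (by fun_prop) (fun x hx => by
      rw [Set.uIcc_of_le (by linarith)] at hx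
      rw [sin_np hx]; try ring)
  rw [← intervalIntegral.integral_add_adjacent_intervals
        (hc.intervalIntegrable 0 π) (hc.intervalIntegrable π (2*π)),
      p1, p2]
  simp [Real.sin_pi, Real.cos_pi, Real.sin_two_pi, Real.cos_two_pi]
  try ring

private lemma iB4 : ∫ x in (0:ℝ)..(2*π), x * sin x * |cos x| = -π := by
  have pi_pos := Real.pi_pos
  have hc : Continuous fun x : ℝ => x * sin x * |cos x| := by fun_prop
  have p1 : ∫ x in (0:ℝ)..(π/2), x * sin x * |cos x|
      = (fun s : ℝ => s * sin s ^ 2 / 2 - s / 4 + sin s * cos s / 4) (π/2) - (fun s : ℝ => s * sin s ^ 2 / 2 - s / 4 + sin s * cos s / 4) 0 :=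
    piece _ _ _ (fun x => x * sin x * cos x) _ d4 (by fun_prop) (fun x hx => by
      rw [Set.uIcc_of_le (by linarith)] at hx
      rw [cos_nn1 hx]; try ring)
  have p2 : ∫ x in (π/2:ℝ)..(3*π/2), x * sin x * |cos x|
      = (fun s : ℝ => s * sin s ^ 2 / 2 - s / 4 + sin s * cos s / 4) (π/2) - (fun s : ℝ => s * sin s ^ 2 / 2 - s / 4 + sin s * cos s / 4) (3*π/2) :=
    pieceN _ _ _ (fun x => x * sin x * cos x) _ d4 (by fun_prop) (fun x hx => by
      rw [Set.uIcc_of_le (by linarith)] at hx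
      rw [cos_np hx]; try ring)
  have p3 : ∫ x in (3*π/2:ℝ)..(2*π), x * sin x * |cos x|
      = (fun s : ℝ => s * sin s ^ 2 / 2 - s / 4 + sin s * cos s / 4) (2*π) - (fun s : ℝ => s * sin s ^ 2 / 2 - s / 4 + sin s * cos s / 4) (3*π/2) :=
    piece _ _ _ (fun x => x * sin x * cos x) _ d4 (by fun_prop) (fun x hx => by
      rw [Set.uIcc_of_le (by linarith)] at hx
      rw [cos_nn2 hx]; try ring)
  rw [← intervalIntegral.integral_add_adjacent_intervals
        (hc.intervalIntegrable 0 (π/2)) (hc.intervalIntegrable (π/2) (2*π)),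
      ← intervalIntegral.integral_add_adjacent_intervals
        (hc.intervalIntegrable (π/2) (3*π/2)) (hc.intervalIntegrable (3*π/2) (2*π)),
      p1, p2, p3]
  simp [Real.sin_pi_div_two, Real.cos_pi_div_two, sin32, cos32,
    Real.sin_two_pi, Real.cos_two_pi]
  try ring

private lemma iB5 : ∫ x in (0:ℝ)..(2*π), x * sin x * |sin x| = -(π^2/2) := by
  have pi_pos := Real.pi_pos
  have hc : Continuous fun x : ℝ => x * sin x * |sin x| := by fun_prop
  have p1 : ∫ x in (0:ℝ)..π, x * sin x * |sin x|
      = (fun s : ℝ => s ^ 2 / 4 - s * (sin s * cos s) / 2 + sin s ^ 2 / 4) π - (fun s : ℝ => s ^ 2 / 4 - s * (sin s * cos s) / 2 + sin s ^ 2 / 4) 0 :=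
    piece _ _ _ (fun x => x * sin x * sin x) _ d6 (by fun_prop) (fun x hx => by
      rw [Set.uIcc_of_le (by linarith)] at hx
      rw [sin_nn hx]; try ring)
  have p2 : ∫ x in (π:ℝ)..(2*π), x * sin x * |sin x|
      = (fun s : ℝ => s ^ 2 / 4 - s * (sin s * cos s) / 2 + sin s ^ 2 / 4) π - (fun s : ℝ => s ^ 2 / 4 - s * (sin s * cos s) / 2 + sin s ^ 2 / 4) (2*π) :=
    pieceN _ _ _ (fun x => x * sin x * sin x) _ d6 (by fun_prop) (fun x hx => by
      rw [Set.uIcc_of_le (by linarith)] at hx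
      rw [sin_np hx]; try ring)
  rw [← intervalIntegral.integral_add_adjacent_intervals
        (hc.intervalIntegrable 0 π) (hc.intervalIntegrable π (2*π)),
      p1, p2]
  simp [Real.sin_pi, Real.cos_pi, Real.sin_two_pi, Real.cos_two_pi]
  try ring

private lemma lin (a b c5 h11 h12 h21 h22 : ℝ) {f1 f2 f3 f4 f5 : ℝ → ℝ}
    (h1 : IntervalIntegrable f1 MeasureTheory.volume a b)
    (h2 : IntervalIntegrable f2 MeasureTheory.volume a b)
    (h3 : IntervalIntegrable f3 MeasureTheory.volume a b)
    (h4 : IntervalIntegrable f4 MeasureTheory.volume a b)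
    (h5 : IntervalIntegrable f5 MeasureTheory.volume a b) :
    ∫ x in a..b, (c5 * f1 x + h11 * f2 x + h12 * f3 x + h21 * f4 x + h22 * f5 x)
      = c5 * (∫ x in a..b, f1 x) + h11 * (∫ x in a..b, f2 x) + h12 * (∫ x in a..b, f3 x)
        + h21 * (∫ x in a..b, f4 x) + h22 * (∫ x in a..b, f5 x) := by
  rw [intervalIntegral.integral_add ((((h1.const_mul c5).add (h2.const_mul h11)).add
        (h3.const_mul h12)).add (h4.const_mul h21)) (h5.const_mul h22),
      intervalIntegral.integral_add (((h1.const_mul c5).add (h2.const_mul h11)).add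
        (h3.const_mul h12)) (h4.const_mul h21),
      intervalIntegral.integral_add ((h1.const_mul c5).add (h2.const_mul h11)) (h3.const_mul h12),
      intervalIntegral.integral_add (h1.const_mul c5) (h2.const_mul h11),
      intervalIntegral.integral_const_mul, intervalIntegral.integral_const_mul,
      intervalIntegral.integral_const_mul, intervalIntegral.integral_const_mul,
      intervalIntegral.integral_const_mul]

end aux19

theorem stmt19 (c5 h11 h12 h21 h22 : ℝ) :
    (∫ s in (0:ℝ)..(2 * π),
        (c5 * cos s * sin s + h11 * cos s * |cos s| + h12 * cos s * |sin s| +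
         h21 * sin s * |cos s| + h22 * sin s * |sin s|)) = 0 ∧
    (∫ s in (0:ℝ)..(2 * π),
        s * (c5 * cos s * sin s + h11 * cos s * |cos s| + h12 * cos s * |sin s| +
         h21 * sin s * |cos s| + h22 * sin s * |sin s|))
      = -(π / 2) * (c5 + 2 * h21 + π * h22) := by
  constructor
  · have e : (∫ s in (0:ℝ)..(2 * π),
        (c5 * cos s * sin s + h11 * cos s * |cos s| + h12 * cos s * |sin s| +
         h21 * sin s * |cos s| + h22 * sin s * |sin s|))
        = ∫ s in (0:ℝ)..(2 * π),
        (c5 * (cos s * sin s) + h11 * (cos s * |cos s|) + h12 * (cos s * |sin s|) +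
         h21 * (sin s * |cos s|) + h22 * (sin s * |sin s|)) :=
      intervalIntegral.integral_congr (fun s _ => by ring)
    rw [e, lin _ _ _ _ _ _ _
      (Continuous.intervalIntegrable (by fun_prop) _ _)
      (Continuous.intervalIntegrable (by fun_prop) _ _)
      (Continuous.intervalIntegrable (by fun_prop) _ _)
      (Continuous.intervalIntegrable (by fun_prop) _ _)
      (Continuous.intervalIntegrable (by fun_prop) _ _),
      iA1, iA2, iA3, iA4, iA5]
    ring
  · have e : (∫ s in (0:ℝ)..(2 * π),
        s * (c5 * cos s * sin s + h11 * cos s * |cos s| + h12 * cos s * |sin s| +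
         h21 * sin s * |cos s| + h22 * sin s * |sin s|))
        = ∫ s in (0:ℝ)..(2 * π),
        (c5 * (s * cos s * sin s) + h11 * (s * cos s * |cos s|) + h12 * (s * cos s * |sin s|) +
         h21 * (s * sin s * |cos s|) + h22 * (s * sin s * |sin s|)) :=
      intervalIntegral.integral_congr (fun s _ => by ring)
    rw [e, lin _ _ _ _ _ _ _
      (Continuous.intervalIntegrable (by fun_prop) _ _)
      (Continuous.intervalIntegrable (by fun_prop) _ _)
      (Continuous.intervalIntegrable (by fun_prop) _ _)
      (Continuous.intervalIntegrable (by fun_prop) _ _)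
      (Continuous.intervalIntegrable (by fun_prop) _ _),
      iB1, iB2, iB3, iB4, iB5]
    ring
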